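/- Let ρ(x) = Ψ(x)/D(x)^α with Ψ, D C¹, Ψ ≥ 0, D > 0 on X̄, and α > 0. Let f_δ : ℝⁿ → ℝⁿ be C¹. Suppose: ‖f_δ(x)‖ ≤ c₁, |div f_δ(x)| ≤ c₂, ‖∇D(x)/D(x)‖ ≤ c_D, and ‖∇Ψ(x)‖ ≤ c_Ψ Ψ(x) for all x ∈ X̄, where c₁, c₂, c_D, c_Ψ are positive constants. Then |div(f_δ ρ)(x)| ≤ γ ρ(x) for all x ∈ X̄, where γ = c₂ + α c₁ c_D + c₁ c_Ψ. -/

import Mathlib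

open Real

lemma sum_single_mul {n : ℕ} (L : EuclideanSpace ℝ (Fin n) →L[ℝ] ℝ)
    (v : EuclideanSpace ℝ (Fin n)) :
    ∑ i, L (EuclideanSpace.single i 1) * v i = L v := by
  have hv := (EuclideanSpace.basisFun (Fin n) ℝ).sum_repr v
  simp only [EuclideanSpace.basisFun_apply, EuclideanSpace.basisFun_repr] at hv
  conv_rhs => rw [← hv]
  rw [map_sum]
  simp [mul_comm]

lemma fderiv_inner_gradient {n : ℕ} (f : EuclideanSpace ℝ (Fin n) → ℝ)
    (x v : EuclideanSpace ℝ (Fin n)) :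
    fderiv ℝ f x v = inner ℝ (gradient f x) v := by
  rw [gradient, InnerProductSpace.toDual_symm_apply]

/-- The divergence of a vector field `F : ℝⁿ → ℝⁿ` at a point. -/
noncomputable def diverg {n : ℕ}
    (F : EuclideanSpace ℝ (Fin n) → EuclideanSpace ℝ (Fin n))
    (x : EuclideanSpace ℝ (Fin n)) : ℝ :=
  ∑ i, fderiv ℝ F x (EuclideanSpace.single i 1) i

/-- Robustness estimate: for `ρ = Ψ/D^α` with the stated bounds on the perturbation
`f_δ` and on `∇D/D`, `∇Ψ`, one has `|div(f_δ ρ)(x)| ≤ γ ρ(x)` on `X̄`,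
where `γ = c₂ + α c₁ c_D + c₁ c_Ψ`. -/
theorem stmt5 {n : ℕ}
    (Ψ D : EuclideanSpace ℝ (Fin n) → ℝ)
    (Xbar : Set (EuclideanSpace ℝ (Fin n))) (hXbar : IsOpen Xbar)
    (hΨ : ContDiff ℝ 1 Ψ) (hΨnonneg : ∀ x, 0 ≤ Ψ x)
    (hD : ContDiff ℝ 1 D) (hDpos : ∀ x ∈ Xbar, 0 < D x)
    (α : ℝ) (hα : 0 < α)
    (ρ : EuclideanSpace ℝ (Fin n) → ℝ)
    (hρ : ∀ x, ρ x = Ψ x / (D x) ^ α)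
    (fδ : EuclideanSpace ℝ (Fin n) → EuclideanSpace ℝ (Fin n))
    (hfδ : ContDiff ℝ 1 fδ)
    (c₁ c₂ cD cΨ : ℝ) (hc₁ : 0 < c₁) (hc₂ : 0 < c₂) (hcD : 0 < cD) (hcΨ : 0 < cΨ)
    (hb₁ : ∀ x ∈ Xbar, ‖fδ x‖ ≤ c₁)
    (hb₂ : ∀ x ∈ Xbar, |diverg fδ x| ≤ c₂)
    (hb₃ : ∀ x ∈ Xbar, ‖(D x)⁻¹ • gradient D x‖ ≤ cD)
    (hb₄ : ∀ x ∈ Xbar, ‖gradient Ψ x‖ ≤ cΨ * Ψ x) :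
    ∀ x ∈ Xbar,
      |diverg (fun y => ρ y • fδ y) x| ≤ (c₂ + α * c₁ * cD + c₁ * cΨ) * ρ x := by
  intro x hx
  have hDx : 0 < D x := hDpos x hx
  have hDα : (0:ℝ) < (D x) ^ (-α) := Real.rpow_pos_of_pos hDx _
  set Lψ := fderiv ℝ Ψ x with hLψ
  set LD := fderiv ℝ D x with hLD
  have hΨ' : HasFDerivAt Ψ Lψ x := (hΨ.differentiable one_ne_zero x).hasFDerivAt
  have hD' : HasFDerivAt D LD x := (hD.differentiable one_ne_zero x).hasFDerivAt
  have hDα' : HasFDerivAt (fun y => (D y) ^ (-α)) ((-α * (D x) ^ (-α - 1)) • LD) x :=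
    hD'.rpow_const (Or.inl hDx.ne')
  set ρ' : EuclideanSpace ℝ (Fin n) →L[ℝ] ℝ :=
    Ψ x • ((-α * (D x) ^ (-α - 1)) • LD) + ((D x) ^ (-α)) • Lψ with hρ'def
  have hρ' : HasFDerivAt ρ ρ' x := by
    refine (hΨ'.mul hDα').congr_of_eventuallyEq ?_
    have hopen : ∀ᶠ y in nhds x, 0 < D y := by
      have : IsOpen {y | 0 < D y} := isOpen_lt continuous_const hD.continuous
      exact this.mem_nhds hDx
    filter_upwards [hopen] with y hy
    rw [hρ y, Pi.mul_apply, Real.rpow_neg hy.le, div_eq_mul_inv]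
  have hf' : HasFDerivAt fδ (fderiv ℝ fδ x) x := (hfδ.differentiable one_ne_zero x).hasFDerivAt
  have hF : HasFDerivAt (fun y => ρ y • fδ y)
      (ρ x • fderiv ℝ fδ x + ρ'.smulRight (fδ x)) x := hρ'.smul hf'
  have hdiv : diverg (fun y => ρ y • fδ y) x = ρ x * diverg fδ x + ρ' (fδ x) := by
    unfold diverg
    rw [hF.fderiv]
    rw [← sum_single_mul ρ' (fδ x)]
    rw [Finset.mul_sum, ← Finset.sum_add_distrib]
    refine Finset.sum_congr rfl fun i _ => ?_
    simp [ContinuousLinearMap.add_apply, ContinuousLinearMap.smulRight_apply,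
      ContinuousLinearMap.smul_apply, PiLp.add_apply, PiLp.smul_apply, smul_eq_mul]
  have hρx : ρ x = Ψ x * (D x) ^ (-α) := by
    rw [hρ x, Real.rpow_neg hDx.le, div_eq_mul_inv]
  have hρnonneg : 0 ≤ ρ x := by
    rw [hρx]; exact mul_nonneg (hΨnonneg x) hDα.le
  have h1 : |Lψ (fδ x)| ≤ cΨ * Ψ x * c₁ := by
    rw [hLψ, fderiv_inner_gradient]
    calc |inner ℝ (gradient Ψ x) (fδ x)| ≤ ‖gradient Ψ x‖ * ‖fδ x‖ := abs_real_inner_le_norm _ _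
      _ ≤ (cΨ * Ψ x) * c₁ :=
          mul_le_mul (hb₄ x hx) (hb₁ x hx) (norm_nonneg _)
            (mul_nonneg hcΨ.le (hΨnonneg x))
  have hgradD : ‖gradient D x‖ ≤ cD * D x := by
    have h := hb₃ x hx
    rw [norm_smul, Real.norm_eq_abs, abs_inv, abs_of_pos hDx] at h
    have h2 := (inv_mul_le_iff₀ hDx).mp h
    linarith [h2]
  have h2 : |LD (fδ x)| ≤ (cD * D x) * c₁ := by
    rw [hLD, fderiv_inner_gradient]
    calc |inner ℝ (gradient D x) (fδ x)| ≤ ‖gradient D x‖ * ‖fδ x‖ := abs_real_inner_le_norm _ _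
      _ ≤ (cD * D x) * c₁ :=
          mul_le_mul hgradD (hb₁ x hx) (norm_nonneg _) (by positivity)
  have hρ'app : ρ' (fδ x) = Ψ x * ((-α * (D x) ^ (-α - 1)) * LD (fδ x))
      + (D x) ^ (-α) * Lψ (fδ x) := by
    simp [hρ'def, ContinuousLinearMap.add_apply, ContinuousLinearMap.smul_apply, mul_assoc]
  have key : |diverg (fun y => ρ y • fδ y) x|
      ≤ ρ x * c₂ + Ψ x * ((α * (D x) ^ (-α - 1)) * ((cD * D x) * c₁))
        + (D x) ^ (-α) * (cΨ * Ψ x * c₁) := by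
    rw [hdiv, hρ'app]
    have hq : (0:ℝ) < (D x) ^ (-α - 1) := Real.rpow_pos_of_pos hDx _
    have t1 : |ρ x * diverg fδ x| ≤ ρ x * c₂ := by
      rw [abs_mul, abs_of_nonneg hρnonneg]
      exact mul_le_mul_of_nonneg_left (hb₂ x hx) hρnonneg
    have t2 : |Ψ x * ((-α * (D x) ^ (-α - 1)) * LD (fδ x))|
        ≤ Ψ x * ((α * (D x) ^ (-α - 1)) * ((cD * D x) * c₁)) := by
      rw [abs_mul, abs_mul, abs_of_nonneg (hΨnonneg x), abs_mul, abs_neg,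
        abs_of_pos hα, abs_of_pos hq]
      refine mul_le_mul_of_nonneg_left ?_ (hΨnonneg x)
      exact mul_le_mul_of_nonneg_left h2 (by positivity)
    have t3 : |(D x) ^ (-α) * Lψ (fδ x)| ≤ (D x) ^ (-α) * (cΨ * Ψ x * c₁) := by
      rw [abs_mul, abs_of_pos hDα]
      exact mul_le_mul_of_nonneg_left h1 hDα.le
    calc |ρ x * diverg fδ x + (Ψ x * ((-α * (D x) ^ (-α - 1)) * LD (fδ x))
          + (D x) ^ (-α) * Lψ (fδ x))|
        ≤ |ρ x * diverg fδ x| + (|Ψ x * ((-α * (D x) ^ (-α - 1)) * LD (fδ x))|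
          + |(D x) ^ (-α) * Lψ (fδ x)|) := (abs_add_le _ _).trans (by gcongr; exact abs_add_le _ _)
      _ ≤ _ := by linarith
  refine key.trans_eq ?_
  have e2 : Ψ x * ((α * (D x) ^ (-α - 1)) * ((cD * D x) * c₁)) = α * c₁ * cD * ρ x := by
    have : (D x) ^ (-α - 1) = (D x) ^ (-α) / D x := Real.rpow_sub_one hDx.ne' _
    rw [this, hρx]
    field_simp
  have e3 : (D x) ^ (-α) * (cΨ * Ψ x * c₁) = c₁ * cΨ * ρ x := by
    rw [hρx]; ring
  rw [e2, e3]
  ring
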